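/- There is an absolute constant C such that for every prime ℓ ≥ 5 and each 1 ≤ i ≤ 5, the image of GC^i(ℓ) ∩ GB(ℓ) under the quotient map GB(ℓ) → GB(ℓ)/GU(ℓ) has cardinality at most C·ℓ. -/

import Mathlib

open Matrix Polynomial

/-- Assemble a `4×4` matrix out of four `2×2` blocks. -/
def blocks4 {ℓ : ℕ} (A B C D : Matrix (Fin 2) (Fin 2) (ZMod ℓ)) :
    Matrix (Fin 4) (Fin 4) (ZMod ℓ) :=
  Matrix.reindex finSumFinEquiv finSumFinEquiv (fromBlocks A B C D)

/-- The standard symplectic matrix `J = [[0, I₂], [−I₂, 0]]`. -/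
def Jmat (ℓ : ℕ) : Matrix (Fin 4) (Fin 4) (ZMod ℓ) :=
  blocks4 0 1 (-1) 0

/-- `GSp₄(F_ℓ) = {M ∈ GL₄(F_ℓ) : ᵗM·J·M = μJ for some μ ∈ F_ℓˣ}`. -/
def GSpSet (ℓ : ℕ) : Set (GL (Fin 4) (ZMod ℓ)) :=
  {M | ∃ μ : (ZMod ℓ)ˣ, M.valᵀ * Jmat ℓ * M.val = (μ : ZMod ℓ) • Jmat ℓ}

/-- `GB(ℓ) = {[[A, μ⁻¹AS], [0, μ(ᵗA)⁻¹]] : A ∈ GL₂ upper triangular, S symmetric,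
μ ∈ F_ℓˣ}`. -/
def GBSet (ℓ : ℕ) : Set (GL (Fin 4) (ZMod ℓ)) :=
  {M | ∃ (A S : Matrix (Fin 2) (Fin 2) (ZMod ℓ)) (μ : (ZMod ℓ)ˣ),
    IsUnit A.det ∧ A 1 0 = 0 ∧ S.IsSymm ∧
    M.val = blocks4 A (((μ⁻¹ : (ZMod ℓ)ˣ) : ZMod ℓ) • (A * S)) 0
      ((μ : ZMod ℓ) • Aᵀ⁻¹)}

/-- `GU(ℓ) = {[[A, AS], [0, (ᵗA)⁻¹]] : A = [[1, a], [0, 1]], S symmetric}`. -/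
def GUSet (ℓ : ℕ) : Set (GL (Fin 4) (ZMod ℓ)) :=
  {M | ∃ (a : ZMod ℓ) (S : Matrix (Fin 2) (Fin 2) (ZMod ℓ)), S.IsSymm ∧
    M.val = blocks4 !![1, a; 0, 1] (!![1, a; 0, 1] * S) 0 (!![1, a; 0, 1]ᵀ⁻¹)}
/-- The five reference quartic polynomials `f₁ = X⁴+μX²+μ²`, `f₂ = X⁴−μX²+μ²`,
`f₃ = X⁴+μ²`, `f₄ = (X²−μ)²`, `f₅ = (X²+μ)²`. -/
noncomputable def fPoly (ℓ : ℕ) (i : ℕ) (μ : ZMod ℓ) : Polynomial (ZMod ℓ) :=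
  if i = 1 then X ^ 4 + C μ * X ^ 2 + C (μ ^ 2)
  else if i = 2 then X ^ 4 - C μ * X ^ 2 + C (μ ^ 2)
  else if i = 3 then X ^ 4 + C (μ ^ 2)
  else if i = 4 then (X ^ 2 - C μ) ^ 2
  else (X ^ 2 + C μ) ^ 2

/-- `GC^i(ℓ)`: the set of `M ∈ GSp₄(F_ℓ)` whose characteristic polynomial equals `f_i`
(for some `μ ∈ F_ℓˣ`) and factors as `(X−λ₁)(X−μλ₁⁻¹)(X−λ₂)(X−μλ₂⁻¹)` with
`λ₁, λ₂ ∈ F_ℓˣ` (the inverses being witnessed by `lam₁'`, `lam₂'`). -/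
def GCSet (ℓ : ℕ) (i : ℕ) : Set (GL (Fin 4) (ZMod ℓ)) :=
  {M | M ∈ GSpSet ℓ ∧ ∃ μ lam₁ lam₂ lam₁' lam₂' : ZMod ℓ, μ ≠ 0 ∧
    lam₁ * lam₁' = 1 ∧ lam₂ * lam₂' = 1 ∧
    M.val.charpoly = fPoly ℓ i μ ∧
    M.val.charpoly =
      (X - C lam₁) * (X - C (μ * lam₁')) * (X - C lam₂) * (X - C (μ * lam₂'))}

section Helpers

variable {ℓ : ℕ}

lemma blocks4_mul (A B C D E F G H : Matrix (Fin 2) (Fin 2) (ZMod ℓ)) :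
    blocks4 A B C D * blocks4 E F G H =
      blocks4 (A*E + B*G) (A*F + B*H) (C*E + D*G) (C*F + D*H) := by
  simp only [blocks4, Matrix.reindex_apply, Matrix.submatrix_mul_equiv,
    Matrix.fromBlocks_multiply]

lemma blocks4_apply_00 (A B C D : Matrix (Fin 2) (Fin 2) (ZMod ℓ)) :
    blocks4 A B C D 0 0 = A 0 0 := by
  have h0 : finSumFinEquiv.symm (0 : Fin 4) = (Sum.inl 0 : Fin 2 ⊕ Fin 2) := by decide
  simp [blocks4, Matrix.reindex_apply, Matrix.submatrix_apply, h0]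

lemma blocks4_apply_11 (A B C D : Matrix (Fin 2) (Fin 2) (ZMod ℓ)) :
    blocks4 A B C D 1 1 = A 1 1 := by
  have h0 : finSumFinEquiv.symm (1 : Fin 4) = (Sum.inl 1 : Fin 2 ⊕ Fin 2) := by decide
  simp [blocks4, Matrix.reindex_apply, Matrix.submatrix_apply, h0]

lemma blocks4_apply_33 (A B C D : Matrix (Fin 2) (Fin 2) (ZMod ℓ)) :
    blocks4 A B C D 3 3 = D 1 1 := by
  have h0 : finSumFinEquiv.symm (3 : Fin 4) = (Sum.inr 1 : Fin 2 ⊕ Fin 2) := by decide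
  simp [blocks4, Matrix.reindex_apply, Matrix.submatrix_apply, h0]

lemma blocks4_charpoly (A B D : Matrix (Fin 2) (Fin 2) (ZMod ℓ)) :
    (blocks4 A B 0 D).charpoly = A.charpoly * D.charpoly := by
  rw [blocks4, Matrix.reindex_apply, ← Matrix.reindex_apply]
  rw [Matrix.charpoly_reindex, Matrix.charpoly_fromBlocks_zero₂₁]

lemma charpoly_fin_two' {R : Type*} [CommRing R] (M : Matrix (Fin 2) (Fin 2) R) :
    M.charpoly = X^2 - C (M 0 0 + M 1 1) * X + C M.det := by
  rw [Matrix.charpoly, Matrix.det_fin_two, Matrix.charmatrix_apply_eq,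
    Matrix.charmatrix_apply_eq, Matrix.charmatrix_apply_ne _ _ _ (by decide),
    Matrix.charmatrix_apply_ne _ _ _ (by decide), Matrix.det_fin_two]
  simp [C_add, C_mul, C_sub]; ring

lemma conj_isSymm {R : Type*} [CommRing R] {S : Matrix (Fin 2) (Fin 2) R}
    (hS : S.IsSymm) (M : Matrix (Fin 2) (Fin 2) R) : (M * S * Mᵀ).IsSymm := by
  unfold Matrix.IsSymm
  rw [Matrix.transpose_mul, Matrix.transpose_mul, Matrix.transpose_transpose, hS.eq,
    Matrix.mul_assoc]

lemma uni_mul {R : Type*} [CommRing R] (a b : R) :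
    !![1,a;0,1] * !![1,b;0,1] = !![1,a+b;0,1] := by
  rw [Matrix.mul_fin_two]; congr 1 <;> ring

lemma lo_mul {R : Type*} [CommRing R] (a b : R) :
    !![1,0;a,1] * !![1,0;b,1] = !![1,0;a+b,1] := by
  rw [Matrix.mul_fin_two]; congr 1 <;> ring

lemma ut_transpose {R : Type*} [CommRing R] (a : R) : (!![1,a;0,1])ᵀ = !![1,0;a,1] := by
  ext i j; fin_cases i <;> fin_cases j <;> rfl

lemma lo_inv {R : Type*} [CommRing R] (a : R) :
    (!![1,0;a,1] : Matrix (Fin 2) (Fin 2) R)⁻¹ = !![1,0;-a,1] := by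
  apply Matrix.inv_eq_right_inv
  rw [Matrix.mul_fin_two, Matrix.one_fin_two]
  congr 1 <;> ring

lemma ut_inv_transpose {R : Type*} [CommRing R] (a : R) :
    (!![1,a;0,1] : Matrix (Fin 2) (Fin 2) R)ᵀ⁻¹ = !![1,0;-a,1] := by
  rw [ut_transpose, lo_inv]

lemma fPoly_natDegree_le (ℓ i : ℕ) (μ : ZMod ℓ) : (fPoly ℓ i μ).natDegree ≤ 4 := by
  unfold fPoly; split_ifs <;> compute_degree

lemma fPoly_eval_zero (ℓ i : ℕ) (μ : ZMod ℓ) : (fPoly ℓ i μ).eval 0 = μ ^ 2 := by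
  unfold fPoly; split_ifs <;> simp

lemma ncard_image_le_image {α β γ : Type*} [Nonempty γ] (s : Set α) (f : α → β) (g : α → γ)
    (hfin : (g '' s).Finite)
    (h : ∀ a ∈ s, ∀ b ∈ s, g a = g b → f a = f b) :
    (f '' s).ncard ≤ (g '' s).ncard := by
  classical
  refine Set.ncard_le_ncard_of_injOn
    (fun y => if hy : ∃ x ∈ s, f x = y then g hy.choose else Classical.arbitrary γ)
    ?_ ?_ hfin
  · rintro y ⟨a, ha, rfl⟩
    have hy : ∃ x ∈ s, f x = f a := ⟨a, ha, rfl⟩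
    simp only [dif_pos hy]
    exact ⟨hy.choose, hy.choose_spec.1, rfl⟩
  · rintro y₁ ⟨a₁, ha₁, rfl⟩ y₂ ⟨a₂, ha₂, rfl⟩ heq
    have hy₁ : ∃ x ∈ s, f x = f a₁ := ⟨a₁, ha₁, rfl⟩
    have hy₂ : ∃ x ∈ s, f x = f a₂ := ⟨a₂, ha₂, rfl⟩
    simp only [dif_pos hy₁, dif_pos hy₂] at heq
    rw [← hy₁.choose_spec.2, ← hy₂.choose_spec.2]
    exact h _ hy₁.choose_spec.1 _ hy₂.choose_spec.1 heq

lemma GUSet_mul {u v : GL (Fin 4) (ZMod ℓ)} (hu : u ∈ GUSet ℓ) (hv : v ∈ GUSet ℓ) :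
    u * v ∈ GUSet ℓ := by
  obtain ⟨a, S, hS, hu⟩ := hu
  obtain ⟨b, T, hT, hv⟩ := hv
  refine ⟨a + b, !![1,-b;0,1] * S * (!![1,-b;0,1])ᵀ + T,
    Matrix.IsSymm.add (conj_isSymm hS _) hT, ?_⟩
  have hval : (↑(u * v) : Matrix (Fin 4) (Fin 4) (ZMod ℓ)) = u.val * v.val := rfl
  rw [hval, hu, hv, blocks4_mul]
  have h1 : !![1,a;0,1] * !![1,b;0,1] + !![1,a;0,1] * S * 0 = !![(1:ZMod ℓ),a+b;0,1] := by
    rw [Matrix.mul_zero, add_zero, uni_mul]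
  have h2 : !![1,a;0,1] * (!![1,b;0,1] * T) + !![1,a;0,1] * S * !![1,b;0,1]ᵀ⁻¹
      = !![(1:ZMod ℓ),a+b;0,1] * (!![1,-b;0,1] * S * (!![1,-b;0,1])ᵀ + T) := by
    rw [ut_inv_transpose, ut_transpose, mul_add, ← Matrix.mul_assoc, uni_mul]
    rw [← Matrix.mul_assoc (!![1,a+b;0,1]), ← Matrix.mul_assoc (!![1,a+b;0,1]), uni_mul]
    have e : a + b + -b = a := by ring
    rw [e, add_comm]
  have h3 : (0 : Matrix (Fin 2) (Fin 2) (ZMod ℓ)) * !![1,b;0,1] + !![1,a;0,1]ᵀ⁻¹ * 0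
      = (0 : Matrix (Fin 2) (Fin 2) (ZMod ℓ)) := by
    rw [Matrix.zero_mul, Matrix.mul_zero, add_zero]
  have h4 : (0 : Matrix (Fin 2) (Fin 2) (ZMod ℓ)) * (!![1,b;0,1] * T)
      + !![1,a;0,1]ᵀ⁻¹ * !![1,b;0,1]ᵀ⁻¹ = !![(1:ZMod ℓ),a+b;0,1]ᵀ⁻¹ := by
    rw [Matrix.zero_mul, zero_add, ut_inv_transpose, ut_inv_transpose, ut_inv_transpose,
      lo_mul]
    have e : -a + -b = -(a+b) := by ring
    rw [e]
  rw [h1, h2, h3, h4]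

end Helpers
section GB
variable {ℓ : ℕ} [Fact ℓ.Prime]

lemma d33_entry (B : Matrix (Fin 2) (Fin 2) (ZMod ℓ)) (ν : ZMod ℓ) :
    (ν • Bᵀ⁻¹) 1 1 = ν * ((B.det)⁻¹ * B 0 0) := by
  rw [Matrix.smul_apply, Matrix.inv_def, Matrix.adjugate_fin_two, Matrix.det_transpose,
    Ring.inverse_eq_inv', Matrix.smul_apply]
  simp [Matrix.transpose_apply]

lemma d00_entry (B : Matrix (Fin 2) (Fin 2) (ZMod ℓ)) (ν : ZMod ℓ) :
    (ν • Bᵀ⁻¹) 0 0 = ν * ((B.det)⁻¹ * B 1 1) := by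
  rw [Matrix.smul_apply, Matrix.inv_def, Matrix.adjugate_fin_two, Matrix.det_transpose,
    Ring.inverse_eq_inv', Matrix.smul_apply]
  simp [Matrix.transpose_apply]

lemma GB_ratio {m m' : GL (Fin 4) (ZMod ℓ)}
    (hm : m ∈ GBSet ℓ) (hm' : m' ∈ GBSet ℓ)
    (h00 : m.val 0 0 = m'.val 0 0) (h11 : m.val 1 1 = m'.val 1 1)
    (h33 : m.val 3 3 = m'.val 3 3) : m⁻¹ * m' ∈ GUSet ℓ := by
  obtain ⟨A, S, μ, hA, hA10, hS, hval⟩ := hm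
  obtain ⟨A', S', μ', hA', hA'10, hS', hval'⟩ := hm'
  have hx' : A' 0 0 = A 0 0 := by
    rw [hval, blocks4_apply_00] at h00; rw [hval', blocks4_apply_00] at h00
    exact h00.symm
  have hy' : A' 1 1 = A 1 1 := by
    rw [hval, blocks4_apply_11] at h11; rw [hval', blocks4_apply_11] at h11
    exact h11.symm
  set x := A 0 0 with hxdef
  set y := A 1 1 with hydef
  have hdetA : A.det = x * y := by rw [Matrix.det_fin_two, hA10, mul_zero, sub_zero]
  have hdetA' : A'.det = x * y := by
    rw [Matrix.det_fin_two, hA'10, mul_zero, sub_zero, hx', hy']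
  have hx : x ≠ 0 := by
    have h := hA; rw [hdetA] at h; exact (isUnit_of_mul_isUnit_left h).ne_zero
  have hy : y ≠ 0 := by
    have h := hA; rw [hdetA, mul_comm] at h; exact (isUnit_of_mul_isUnit_left h).ne_zero
  -- similitude factors agree
  have hμμ' : (μ : ZMod ℓ) = (μ' : ZMod ℓ) := by
    rw [hval, blocks4_apply_33, d33_entry, hdetA] at h33
    rw [hval', blocks4_apply_33, d33_entry, hdetA', hx'] at h33
    have hw : (x * y)⁻¹ * x ≠ 0 :=
      mul_ne_zero (inv_ne_zero (mul_ne_zero hx hy)) hx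
    exact mul_right_cancel₀ hw h33
  have hμeq : μ = μ' := Units.ext hμμ'
  subst hμeq
  -- the unipotent ratio
  set a := (A' 0 1 - A 0 1) * x⁻¹ with hadef
  set U : Matrix (Fin 2) (Fin 2) (ZMod ℓ) := !![1, a; 0, 1] with hUdef
  have hdetU : IsUnit U.det := by
    rw [hUdef, Matrix.det_fin_two_of]; simp
  have hAU : A * U = A' := by
    ext i j
    fin_cases i <;> fin_cases j <;>
      simp [hUdef, Matrix.mul_apply, Fin.sum_univ_two, hA10, hA'10, hx', hy']
    · rfl
    · -- entry (0,1) : x * a + A 0 1 = A' 0 1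
      rw [hadef]
      field_simp
      rw [← hxdef]; ring
    · rfl
  have hdetAt : IsUnit Aᵀ.det := by rwa [Matrix.det_transpose]
  have hdetA't : IsUnit A'ᵀ.det := by rwa [Matrix.det_transpose]
  have hA't : A'ᵀ = Uᵀ * Aᵀ := by rw [← Matrix.transpose_mul, hAU]
  have hUtinv : Uᵀ⁻¹ = Aᵀ * A'ᵀ⁻¹ := by
    rw [hA't, Matrix.mul_inv_rev, ← Matrix.mul_assoc, Matrix.mul_nonsing_inv _ hdetAt,
      Matrix.one_mul]
  set c : ZMod ℓ := ((μ⁻¹ : (ZMod ℓ)ˣ) : ZMod ℓ) with hcdef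
  set Q : Matrix (Fin 2) (Fin 2) (ZMod ℓ) := A * S * Aᵀ with hQdef
  have hQsymm : Q.IsSymm := conj_isSymm hS A
  set W : Matrix (Fin 2) (Fin 2) (ZMod ℓ) := A'⁻¹ * Q * (A'⁻¹)ᵀ with hWdef
  have hWsymm : W.IsSymm := conj_isSymm hQsymm A'⁻¹
  set S₀ : Matrix (Fin 2) (Fin 2) (ZMod ℓ) := c • (S' - W) with hS₀def
  have hS₀symm : S₀.IsSymm := by
    unfold Matrix.IsSymm
    rw [hS₀def, Matrix.transpose_smul, Matrix.transpose_sub, hS'.eq, hWsymm.eq]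
  refine ⟨a, S₀, hS₀symm, ?_⟩
  -- main identity
  have key : m.val * blocks4 U (U * S₀) 0 (Uᵀ⁻¹) = m'.val := by
    rw [hval, blocks4_mul]
    have h1 : A * U + c • (A * S) * 0 = A' := by rw [Matrix.mul_zero, add_zero, hAU]
    have h3 : (0:Matrix (Fin 2) (Fin 2) (ZMod ℓ)) * U + (μ:ZMod ℓ) • Aᵀ⁻¹ * 0 = 0 := by
      rw [Matrix.zero_mul, Matrix.mul_zero, add_zero]
    have h4 : (0:Matrix (Fin 2) (Fin 2) (ZMod ℓ)) * (U * S₀)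
        + (μ:ZMod ℓ) • Aᵀ⁻¹ * Uᵀ⁻¹ = (μ:ZMod ℓ) • A'ᵀ⁻¹ := by
      rw [Matrix.zero_mul, zero_add, Matrix.smul_mul, hA't, Matrix.mul_inv_rev]
    have h2 : A * (U * S₀) + c • (A * S) * Uᵀ⁻¹ = c • (A' * S') := by
      have e1 : A * (U * S₀) = c • (A' * S' - Q * A'ᵀ⁻¹) := by
        rw [← Matrix.mul_assoc, hAU, hS₀def, mul_smul_comm, Matrix.mul_sub, hWdef,
          ← Matrix.mul_assoc, ← Matrix.mul_assoc, Matrix.mul_nonsing_inv _ hA',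
          Matrix.one_mul, Matrix.transpose_nonsing_inv]
      have e2 : c • (A * S) * Uᵀ⁻¹ = c • (Q * A'ᵀ⁻¹) := by
        rw [Matrix.smul_mul, hUtinv, hQdef, ← Matrix.mul_assoc, Matrix.mul_assoc (A*S),
          ← Matrix.mul_assoc]
      rw [e1, e2, ← smul_add, sub_add_cancel]
    rw [h1, h2, h3, h4, ← hval']
  have hdetm : IsUnit (m.val.det) := (Matrix.isUnit_iff_isUnit_det _).mp m.isUnit
  have : (↑(m⁻¹ * m') : Matrix (Fin 4) (Fin 4) (ZMod ℓ)) = m.val⁻¹ * m'.val := by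
    rw [Units.val_mul, Matrix.coe_units_inv]
  rw [this, ← key, ← Matrix.mul_assoc, Matrix.nonsing_inv_mul _ hdetm, Matrix.one_mul]

end GB
section Count

noncomputable def Gfin (ℓ i : ℕ) [Fact ℓ.Prime] : Finset (ZMod ℓ × ZMod ℓ × ZMod ℓ) :=
  Finset.univ.biUnion fun μc : ZMod ℓ =>
    (fPoly ℓ i μc).roots.toFinset ×ˢ ((fPoly ℓ i μc).roots.toFinset ×ˢ
      (((fPoly ℓ i μc).roots.toFinset.image fun z => μc * z⁻¹) ∪
       ((fPoly ℓ i μc).roots.toFinset.image fun z => -(μc * z⁻¹))))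

variable {ℓ : ℕ} [Fact ℓ.Prime]

lemma triple_mem {i : ℕ} {m : GL (Fin 4) (ZMod ℓ)}
    (hmc : m ∈ GCSet ℓ i) (hmb : m ∈ GBSet ℓ) :
    (m.val 0 0, m.val 1 1, m.val 3 3) ∈ Gfin ℓ i := by
  obtain ⟨-, μc, l1, l2, l1', l2', hμc, -, -, hcp, -⟩ := hmc
  obtain ⟨A, S, μ, hA, hA10, hS, hval⟩ := hmb
  set x := A 0 0 with hxdef
  set y := A 1 1 with hydef
  have hdetA : A.det = x * y := by rw [Matrix.det_fin_two, hA10, mul_zero, sub_zero]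
  have hx : x ≠ 0 := by
    have h := hA; rw [hdetA] at h; exact (isUnit_of_mul_isUnit_left h).ne_zero
  have hy : y ≠ 0 := by
    have h := hA; rw [hdetA, mul_comm] at h; exact (isUnit_of_mul_isUnit_left h).ne_zero
  set D : Matrix (Fin 2) (Fin 2) (ZMod ℓ) := (μ : ZMod ℓ) • Aᵀ⁻¹ with hDdef
  have e00 : m.val 0 0 = x := by rw [hval, blocks4_apply_00]
  have e11 : m.val 1 1 = y := by rw [hval, blocks4_apply_11]
  have e33 : m.val 3 3 = (μ : ZMod ℓ) * ((x*y)⁻¹ * x) := by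
    rw [hval, blocks4_apply_33, hDdef, d33_entry, hdetA]
  have hD00 : D 0 0 = (μ : ZMod ℓ) * ((x*y)⁻¹ * y) := by rw [hDdef]; rw [d00_entry, hdetA]
  have hD11 : D 1 1 = (μ : ZMod ℓ) * ((x*y)⁻¹ * x) := by rw [hDdef]; rw [d33_entry, hdetA]
  have hdetD : D.det = (μ : ZMod ℓ)^2 * (x*y)⁻¹ := by
    rw [hDdef, Matrix.det_smul, Matrix.det_nonsing_inv, Matrix.det_transpose, hdetA,
      Ring.inverse_eq_inv']
    simp
  have hchar : m.val.charpoly = A.charpoly * D.charpoly := by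
    rw [hval, blocks4_charpoly]
  have hf0 : fPoly ℓ i μc ≠ 0 := by
    rw [← hcp]; exact (Matrix.charpoly_monic _).ne_zero
  have heval : ∀ z : ZMod ℓ,
      (fPoly ℓ i μc).eval z = A.charpoly.eval z * D.charpoly.eval z := by
    intro z; rw [← hcp, hchar, Polynomial.eval_mul]
  have hmemR : ∀ z : ZMod ℓ, (fPoly ℓ i μc).eval z = 0 →
      z ∈ (fPoly ℓ i μc).roots.toFinset := by
    intro z hz
    exact Multiset.mem_toFinset.mpr (Polynomial.mem_roots'.mpr ⟨hf0, hz⟩)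
  have hrx : (fPoly ℓ i μc).eval x = 0 := by
    rw [heval, charpoly_fin_two' A, hdetA]
    simp only [Polynomial.eval_add, Polynomial.eval_sub, Polynomial.eval_mul,
      Polynomial.eval_pow, Polynomial.eval_X, Polynomial.eval_C]
    have : x^2 - (x + y) * x + x * y = 0 := by ring
    rw [this, zero_mul]
  have hry : (fPoly ℓ i μc).eval y = 0 := by
    rw [heval, charpoly_fin_two' A, hdetA]
    simp only [Polynomial.eval_add, Polynomial.eval_sub, Polynomial.eval_mul,
      Polynomial.eval_pow, Polynomial.eval_X, Polynomial.eval_C]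
    have : y^2 - (x + y) * y + x * y = 0 := by ring
    rw [this, zero_mul]
  set t : ZMod ℓ := (μ : ZMod ℓ) * ((x*y)⁻¹ * x) with htdef
  have hrt : (fPoly ℓ i μc).eval t = 0 := by
    rw [heval, charpoly_fin_two' D, hD00, hD11, hdetD]
    simp only [Polynomial.eval_add, Polynomial.eval_sub, Polynomial.eval_mul,
      Polynomial.eval_pow, Polynomial.eval_X, Polynomial.eval_C]
    have : t^2 - ((μ : ZMod ℓ) * ((x*y)⁻¹ * y) + (μ : ZMod ℓ) * ((x*y)⁻¹ * x)) * t
        + (μ : ZMod ℓ)^2 * (x*y)⁻¹ = 0 := by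
      rw [htdef]; field_simp; ring
    rw [this, mul_zero]
  have hyt : y * t = (μ : ZMod ℓ) := by rw [htdef]; field_simp
  have hμ2 : μc ^ 2 = (y * t) ^ 2 := by
    have h0 := heval 0
    rw [fPoly_eval_zero, charpoly_fin_two' A, charpoly_fin_two' D, hdetA, hdetD,
      hD00, hD11] at h0
    simp only [Polynomial.eval_add, Polynomial.eval_sub, Polynomial.eval_mul,
      Polynomial.eval_pow, Polynomial.eval_X, Polynomial.eval_C, ne_eq, OfNat.ofNat_ne_zero,
      not_false_eq_true, zero_pow, mul_zero, sub_zero, zero_add] at h0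
    rw [hyt, h0]
    field_simp
  rw [e00, e11, e33]
  refine Finset.mem_biUnion.mpr ⟨μc, Finset.mem_univ _, ?_⟩
  rw [Finset.mem_product]
  refine ⟨hmemR x hrx, ?_⟩
  rw [Finset.mem_product]
  refine ⟨hmemR y hry, ?_⟩
  rcases sq_eq_sq_iff_eq_or_eq_neg.mp hμ2 with hcase | hcase
  · refine Finset.mem_union_left _ (Finset.mem_image.mpr ⟨y, hmemR y hry, ?_⟩)
    rw [hcase]
    field_simp
  · refine Finset.mem_union_right _ (Finset.mem_image.mpr ⟨y, hmemR y hry, ?_⟩)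
    rw [hcase]
    field_simp

lemma Gfin_card_le (i : ℕ) : (Gfin ℓ i).card ≤ 128 * ℓ := by
  have hcard : ∀ μc : ZMod ℓ,
      ((fPoly ℓ i μc).roots.toFinset ×ˢ ((fPoly ℓ i μc).roots.toFinset ×ˢ
        (((fPoly ℓ i μc).roots.toFinset.image fun z => μc * z⁻¹) ∪
         ((fPoly ℓ i μc).roots.toFinset.image fun z => -(μc * z⁻¹))))).card ≤ 128 := by
    intro μc
    set R := (fPoly ℓ i μc).roots.toFinset with hR
    have hR4 : R.card ≤ 4 :=
      (Multiset.toFinset_card_le _).trans ((Polynomial.card_roots' _).trans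
        (fPoly_natDegree_le ℓ i μc))
    have hU8 : ((R.image fun z => μc * z⁻¹) ∪ (R.image fun z => -(μc * z⁻¹))).card ≤ 8 := by
      refine (Finset.card_union_le _ _).trans ?_
      have h1 := (Finset.card_image_le (s := R) (f := fun z => μc * z⁻¹)).trans hR4
      have h2 := (Finset.card_image_le (s := R) (f := fun z => -(μc * z⁻¹))).trans hR4
      omega
    rw [Finset.card_product, Finset.card_product]
    calc R.card * (R.card * ((R.image fun z => μc * z⁻¹) ∪
          (R.image fun z => -(μc * z⁻¹))).card) ≤ 4 * (4 * 8) :=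
        Nat.mul_le_mul hR4 (Nat.mul_le_mul hR4 hU8)
      _ = 128 := rfl
  calc (Gfin ℓ i).card ≤ ∑ μc : ZMod ℓ, _ := Finset.card_biUnion_le
    _ ≤ ∑ _μc : ZMod ℓ, 128 := Finset.sum_le_sum fun μc _ => hcard μc
    _ = Fintype.card (ZMod ℓ) * 128 := by rw [Finset.sum_const, smul_eq_mul, Finset.card_univ]
    _ = ℓ * 128 := by rw [ZMod.card]
    _ = 128 * ℓ := Nat.mul_comm _ _

end Count

/-- There is an absolute constant `C` such that for every prime `ℓ ≥ 5`
and each `1 ≤ i ≤ 5`, the image of `GC^i(ℓ) ∩ GB(ℓ)` under the quotient map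
`GB(ℓ) → GB(ℓ)/GU(ℓ)` has cardinality at most `C·ℓ`.  The image in the quotient is encoded
as the collection of left cosets `m·GU(ℓ)` as `m` ranges over `GC^i(ℓ) ∩ GB(ℓ)`. -/
theorem gsp4_quotient_image_linear_bound :
    ∃ C : ℕ, ∀ ℓ : ℕ, ℓ.Prime → 5 ≤ ℓ → ∀ i : ℕ, 1 ≤ i → i ≤ 5 →
      Set.ncard {S : Set (GL (Fin 4) (ZMod ℓ)) |
        ∃ m ∈ GCSet ℓ i ∩ GBSet ℓ, S = {x | m⁻¹ * x ∈ GUSet ℓ}} ≤ C * ℓ := by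
  classical
  refine ⟨128, ?_⟩
  intro ℓ hp hl5 i hi1 hi5
  haveI := Fact.mk hp
  set T := GCSet ℓ i ∩ GBSet ℓ with hT
  set cosF : GL (Fin 4) (ZMod ℓ) → Set (GL (Fin 4) (ZMod ℓ)) :=
    fun m => {x | m⁻¹ * x ∈ GUSet ℓ} with hcosF
  set trF : GL (Fin 4) (ZMod ℓ) → ZMod ℓ × ZMod ℓ × ZMod ℓ :=
    fun m => (m.val 0 0, m.val 1 1, m.val 3 3) with htrF
  have hset : {S : Set (GL (Fin 4) (ZMod ℓ)) |
      ∃ m ∈ T, S = {x | m⁻¹ * x ∈ GUSet ℓ}} = cosF '' T := by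
    ext S
    constructor
    · rintro ⟨m, hm, rfl⟩; exact ⟨m, hm, rfl⟩
    · rintro ⟨m, hm, rfl⟩; exact ⟨m, hm, rfl⟩
  rw [hset]
  have main_h : ∀ a ∈ T, ∀ b ∈ T, trF a = trF b → cosF a = cosF b := by
    intro a ha b hb heq
    rw [htrF] at heq
    simp only [Prod.mk.injEq] at heq
    obtain ⟨e1, e2, e3⟩ := heq
    have hab : a⁻¹ * b ∈ GUSet ℓ := GB_ratio ha.2 hb.2 e1 e2 e3
    have hba : b⁻¹ * a ∈ GUSet ℓ := GB_ratio hb.2 ha.2 e1.symm e2.symm e3.symm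
    rw [hcosF]
    ext z
    simp only [Set.mem_setOf_eq]
    constructor
    · intro hz
      have h := GUSet_mul hba hz
      rwa [show b⁻¹ * a * (a⁻¹ * z) = b⁻¹ * z by group] at h
    · intro hz
      have h := GUSet_mul hab hz
      rwa [show a⁻¹ * b * (b⁻¹ * z) = a⁻¹ * z by group] at h
  calc (cosF '' T).ncard ≤ (trF '' T).ncard :=
      ncard_image_le_image T cosF trF (Set.toFinite _) main_h
    _ ≤ (Gfin ℓ i).card := by
        rw [← Set.ncard_coe_finset]
        refine Set.ncard_le_ncard ?_ (Finset.finite_toSet _)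
        rintro p ⟨m, hm, rfl⟩
        exact triple_mem hm.1 hm.2
    _ ≤ 128 * ℓ := Gfin_card_le i
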